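/- arXiv:1401.4148 — 2 statements merged into one kernel-verified Lean document; each statement's English description precedes it below -/
import Mathlib

section
/- The d-dimensional Lebesgue measure of the region R_{b,T} = {(x,y) ∈ ℝ^m × ℝ^n : ‖x‖^m ‖y‖^n ≤ b, 1 ≤ ‖y‖ < T} equals b · B_m · C_n · log T, where B_m is the volume of the unit ball in ℝ^m, C_n is the surface area of the unit sphere in ℝ^n, ‖·‖ denotes the Euclidean norm, b > 0, and T > 1. -/
open MeasureTheory
open scoped ENNReal

/-- The `d`-dimensional Lebesgue measure of
`R_{b,T} = {(x,y) ∈ ℝ^m × ℝ^n : ‖x‖^m ‖y‖^n ≤ b, 1 ≤ ‖y‖ < T}` equals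
`b · B_m · C_n · log T`, where `B_m` is the volume of the unit ball in `ℝ^m`
and `C_n = n · B_n` is the surface area of the unit sphere in `ℝ^n`. -/
theorem stmt_1 (m n : ℕ) (hm : 1 ≤ m) (hn : 1 ≤ n) (b T : ℝ) (hb : 0 < b) (hT : 1 < T) :
    volume {p : EuclideanSpace ℝ (Fin m) × EuclideanSpace ℝ (Fin n) |
        ‖p.1‖ ^ m * ‖p.2‖ ^ n ≤ b ∧ 1 ≤ ‖p.2‖ ∧ ‖p.2‖ < T} =
      ENNReal.ofReal (b * (volume (Metric.ball (0 : EuclideanSpace ℝ (Fin m)) 1)).toReal *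
        ((n : ℝ) * (volume (Metric.ball (0 : EuclideanSpace ℝ (Fin n)) 1)).toReal) *
        Real.log T) := by
  classical
  set E := EuclideanSpace ℝ (Fin m)
  set F := EuclideanSpace ℝ (Fin n)
  have hm0 : m ≠ 0 := by omega
  have hn0 : n ≠ 0 := by omega
  haveI : Nontrivial F := Module.nontrivial_of_finrank_pos (R := ℝ)
    (by rw [finrank_euclideanSpace_fin]; omega)
  set Bm : ℝ≥0∞ := volume (Metric.ball (0 : E) 1) with hBm
  set Bn : ℝ≥0∞ := volume (Metric.ball (0 : F) 1) with hBn
  set S : Set (E × F) :=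
    {p : E × F | ‖p.1‖ ^ m * ‖p.2‖ ^ n ≤ b ∧ 1 ≤ ‖p.2‖ ∧ ‖p.2‖ < T} with hSdef
  set f : ℝ → ℝ := Set.indicator (Set.Ico 1 T) (fun r => b / r ^ n) with hfdef
  have hS : MeasurableSet S := by
    apply MeasurableSet.inter
    · exact measurableSet_le
        ((measurable_fst.norm.pow_const m).mul (measurable_snd.norm.pow_const n))
        measurable_const
    apply MeasurableSet.inter
    · exact measurableSet_le measurable_const measurable_snd.norm
    · exact measurableSet_lt measurable_snd.norm measurable_const
  -- slice computation
  have hslice : ∀ y : F, volume ((fun x => (x, y)) ⁻¹' S) = ENNReal.ofReal (f ‖y‖) * Bm := by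
    intro y
    by_cases hy : 1 ≤ ‖y‖ ∧ ‖y‖ < T
    · have hy0 : 0 < ‖y‖ ^ n := pow_pos (lt_of_lt_of_le one_pos hy.1) n
      set r : ℝ := (b / ‖y‖ ^ n) ^ ((n : ℝ)⁻¹ * (n : ℝ) * (m : ℝ)⁻¹) with hrdef
      have hr0 : 0 ≤ b / ‖y‖ ^ n := div_nonneg hb.le hy0.le
      set r : ℝ := (b / ‖y‖ ^ n) ^ ((m : ℝ)⁻¹) with hrdef
      have hr : 0 ≤ r := Real.rpow_nonneg hr0 _
      have hrm : r ^ m = b / ‖y‖ ^ n := Real.rpow_inv_natCast_pow hr0 hm0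
      have hset : (fun x => (x, y)) ⁻¹' S = Metric.closedBall (0 : E) r := by
        ext x
        simp only [hSdef, Set.mem_preimage, Set.mem_setOf_eq, Metric.mem_closedBall,
          dist_zero_right]
        constructor
        · rintro ⟨h1, -, -⟩
          have : ‖x‖ ^ m ≤ r ^ m := by rw [hrm, le_div_iff₀ hy0]; exact h1
          exact (pow_le_pow_iff_left₀ (norm_nonneg _) hr hm0).mp this
        · intro hx
          refine ⟨?_, hy.1, hy.2⟩
          have : ‖x‖ ^ m ≤ r ^ m := pow_le_pow_left₀ (norm_nonneg _) hx m
          rw [hrm, le_div_iff₀ hy0] at this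
          exact this
      rw [hset, MeasureTheory.Measure.addHaar_closedBall volume (0 : E) hr,
        finrank_euclideanSpace_fin, hrm, hfdef,
        Set.indicator_of_mem (by exact ⟨hy.1, hy.2⟩) _]
    · have hset : (fun x => (x, y)) ⁻¹' S = (∅ : Set E) := by
        ext x
        simp only [hSdef, Set.mem_preimage, Set.mem_setOf_eq, Set.mem_empty_iff_false,
          iff_false, not_and]
        intro _ h1 h2
        exact hy ⟨h1, h2⟩
      rw [hset, hfdef, Set.indicator_of_notMem (by exact hy) _]
      simp
  -- f measurability and integrability of y ↦ f ‖y‖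
  have hfm : Measurable f := by
    apply Measurable.indicator
    · fun_prop
    · exact measurableSet_Ico
  have hgm : Measurable fun y : F => f ‖y‖ := hfm.comp measurable_norm
  have hgnonneg : ∀ y : F, 0 ≤ f ‖y‖ := by
    intro y
    rw [hfdef]
    apply Set.indicator_nonneg
    intro r hr
    exact div_nonneg hb.le (pow_nonneg (le_trans zero_le_one hr.1) n)
  have hgint : Integrable (fun y : F => f ‖y‖) := by
    have hsupp : Function.support (fun y : F => f ‖y‖) ⊆ Metric.closedBall (0 : F) T := by
      intro y hy
      simp only [Function.mem_support, hfdef] at hy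
      by_contra hc
      apply hy
      apply Set.indicator_of_notMem
      intro hmem
      exact hc (by simpa [Metric.mem_closedBall, dist_zero_right] using hmem.2.le)
    rw [← integrableOn_iff_integrable_of_support_subset hsupp]
    apply Measure.integrableOn_of_bounded (M := b)
    · exact measure_closedBall_lt_top.ne
    · exact hgm.aestronglyMeasurable
    · filter_upwards with y
      rw [Real.norm_of_nonneg (hgnonneg y), hfdef]
      by_cases hmem : ‖y‖ ∈ Set.Ico (1 : ℝ) T
      · rw [Set.indicator_of_mem hmem]
        have h1 : (1 : ℝ) ≤ ‖y‖ ^ n := one_le_pow₀ hmem.1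
        calc b / ‖y‖ ^ n ≤ b / 1 := by
              apply div_le_div_of_nonneg_left hb.le one_pos h1
          _ = b := div_one b
      · rw [Set.indicator_of_notMem hmem]; exact hb.le
  -- main computation
  rw [MeasureTheory.Measure.volume_eq_prod, Measure.prod_apply_symm hS]
  rw [lintegral_congr hslice,
    lintegral_mul_const _ (by exact (ENNReal.measurable_ofReal.comp hgm)),
    ← ofReal_integral_eq_lintegral_ofReal hgint (Filter.Eventually.of_forall hgnonneg)]
  -- polar coordinates
  rw [integral_fun_norm_addHaar volume f]
  rw [finrank_euclideanSpace_fin]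
  -- compute the radial integral
  have hradial : (∫ r in Set.Ioi (0:ℝ), r ^ (n - 1) • f r) = b * Real.log T := by
    have hcongr : ∀ r ∈ Set.Ioi (0:ℝ),
        r ^ (n - 1) • f r = Set.indicator (Set.Ico 1 T) (fun r => b / r) r := by
      intro r hr
      simp only [Set.mem_Ioi] at hr
      rw [smul_eq_mul, hfdef]
      by_cases hmem : r ∈ Set.Ico (1 : ℝ) T
      · rw [Set.indicator_of_mem hmem, Set.indicator_of_mem hmem]
        have hrn : r ^ n = r ^ (n - 1) * r := by
          rw [← pow_succ]
          congr 1
          omega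
        field_simp [hrn]
        ring_nf; rw [hrn]; ring
      · rw [Set.indicator_of_notMem hmem, Set.indicator_of_notMem hmem, mul_zero]
    rw [setIntegral_congr_fun measurableSet_Ioi hcongr,
      setIntegral_indicator measurableSet_Ico]
    have hinter : Set.Ioi (0:ℝ) ∩ Set.Ico 1 T = Set.Ico 1 T :=
      Set.inter_eq_self_of_subset_right (fun r hr => lt_of_lt_of_le one_pos hr.1)
    rw [hinter, MeasureTheory.integral_Ico_eq_integral_Ioo, ← MeasureTheory.integral_Ioc_eq_integral_Ioo,
      ← intervalIntegral.integral_of_le hT.le]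
    have : (∫ x in (1:ℝ)..T, b / x) = b * ∫ x in (1:ℝ)..T, x⁻¹ := by
      simp only [div_eq_mul_inv]
      rw [intervalIntegral.integral_const_mul]
    rw [this, integral_inv (by
      intro hmem
      rw [Set.uIcc_of_le hT.le] at hmem
      exact absurd hmem.1 (by norm_num)), div_one]
  rw [hradial]
  -- assemble
  have hBmfin : Bm ≠ ⊤ := measure_ball_lt_top.ne
  have key : ∀ c : ℝ, 0 ≤ c → ENNReal.ofReal c * Bm = ENNReal.ofReal (c * Bm.toReal) := by
    intro c hc
    conv_lhs => rw [← ENNReal.ofReal_toReal hBmfin]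
    rw [← ENNReal.ofReal_mul hc]
  rw [nsmul_eq_mul, smul_eq_mul,
    key _ (mul_nonneg (Nat.cast_nonneg n) (mul_nonneg measureReal_nonneg
      (mul_nonneg hb.le (Real.log_nonneg hT.le))))]
  congr 1
  rw [measureReal_def, ← hBn]
  ring
end

section
/- Let ε > 0. There exists δ > 0 such that for all B ∈ GL(m,ℝ), C ∈ M_{n×m}(ℝ), D ∈ GL(n,ℝ) with ‖B − I‖ ≤ δ, ‖C‖ ≤ δ, ‖D − I‖ ≤ δ, and all (x,y) ∈ ℝ^m × ℝ^n with ‖x‖^m ‖y‖^n ≤ b and ‖y‖ ≥ 1, one has (1−ε)·‖x‖^m‖y‖^n ≤ ‖Bx‖^m · ‖Cx + Dy‖^n ≤ (1+ε)·‖x‖^m‖y‖^n + ε. -/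
private lemma aux_pow (k : ℕ) (c : ℝ) (hc : 0 ≤ c) (hc1 : c ≤ 1) :
    (1 + c) ^ k ≤ 1 + ((2:ℝ) ^ k - 1) * c := by
  induction k with
  | zero => simp
  | succ k ih =>
    have h2 : (1:ℝ) ≤ 2 ^ k := one_le_pow₀ (by norm_num)
    have hpos : (0:ℝ) ≤ 1 + c := by linarith
    calc (1+c)^(k+1) = (1+c)^k * (1+c) := by ring
      _ ≤ (1 + (2^k - 1) * c) * (1+c) := by nlinarith
      _ ≤ 1 + (2^(k+1) - 1) * c := by
          have hx : (0:ℝ) ≤ (2^k - 1) * c * (1 - c) :=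
            mul_nonneg (mul_nonneg (by linarith) hc) (by linarith)
          have hs : (2:ℝ)^(k+1) = 2^k * 2 := pow_succ 2 k
          nlinarith

set_option maxHeartbeats 1000000 in
/-- Key distortion estimate: for every `ε > 0` there is `δ > 0` such that whenever
`‖B - I‖ ≤ δ`, `‖C‖ ≤ δ`, `‖D - I‖ ≤ δ` (operator norms) and `‖x‖^m ‖y‖^n ≤ b`, `‖y‖ ≥ 1`,
one has `(1-ε)‖x‖^m‖y‖^n ≤ ‖Bx‖^m ‖Cx + Dy‖^n ≤ (1+ε)‖x‖^m‖y‖^n + ε`. -/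
theorem stmt_9 (m n : ℕ) (hm : 1 ≤ m) (hn : 1 ≤ n) (b : ℝ) (hb : 0 < b)
    (ε : ℝ) (hε : 0 < ε) :
    ∃ δ : ℝ, 0 < δ ∧
      ∀ (B : EuclideanSpace ℝ (Fin m) →L[ℝ] EuclideanSpace ℝ (Fin m))
        (C : EuclideanSpace ℝ (Fin m) →L[ℝ] EuclideanSpace ℝ (Fin n))
        (D : EuclideanSpace ℝ (Fin n) →L[ℝ] EuclideanSpace ℝ (Fin n)),
        Function.Bijective B → Function.Bijective D →
        ‖B - ContinuousLinearMap.id ℝ (EuclideanSpace ℝ (Fin m))‖ ≤ δ → ‖C‖ ≤ δ →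
        ‖D - ContinuousLinearMap.id ℝ (EuclideanSpace ℝ (Fin n))‖ ≤ δ →
        ∀ (x : EuclideanSpace ℝ (Fin m)) (y : EuclideanSpace ℝ (Fin n)),
          ‖x‖ ^ m * ‖y‖ ^ n ≤ b → 1 ≤ ‖y‖ →
          (1 - ε) * (‖x‖ ^ m * ‖y‖ ^ n) ≤ ‖B x‖ ^ m * ‖C x + D y‖ ^ n ∧
            ‖B x‖ ^ m * ‖C x + D y‖ ^ n ≤ (1 + ε) * (‖x‖ ^ m * ‖y‖ ^ n) + ε := by
  set R : ℝ := max b 1 with hRdef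
  have hR1 : (1:ℝ) ≤ R := le_max_right _ _
  set k : ℕ := m + n with hk
  have h2k : (1:ℝ) ≤ 2 ^ k := one_le_pow₀ (by norm_num)
  set ε' : ℝ := min ε (ε / b) with hε'def
  have hε'0 : 0 < ε' := lt_min hε (div_pos hε hb)
  have hε'1 : ε' ≤ ε := min_le_left _ _
  have hε'2 : ε' ≤ ε / b := min_le_right _ _
  refine ⟨min (1/(2*(R+1))) (ε' / (2^k * (R+1))), lt_min (by positivity) (by positivity), ?_⟩
  set δ : ℝ := min (1/(2*(R+1))) (ε' / (2^k * (R+1))) with hδdef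
  have hδ0 : 0 < δ := lt_min (by positivity) (by positivity)
  intro B C D _ _ hB hC hD x y ht hy
  set c : ℝ := δ * (R+1) with hcdef
  have hc0 : 0 ≤ c := by positivity
  have hchalf : c ≤ 1/2 := by
    have h1 : δ ≤ 1/(2*(R+1)) := min_le_left _ _
    have : c ≤ (1/(2*(R+1))) * (R+1) :=
      mul_le_mul_of_nonneg_right h1 (by linarith)
    rw [div_mul_eq_mul_div, one_mul] at this
    calc c ≤ (R+1)/(2*(R+1)) := this
      _ = 1/2 := by field_simp
  have hck : 2^k * c ≤ ε' := by
    have h2 : δ ≤ ε' / (2^k * (R+1)) := min_le_right _ _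
    have : c ≤ (ε' / (2^k * (R+1))) * (R+1) :=
      mul_le_mul_of_nonneg_right h2 (by linarith)
    have hR1' : (0:ℝ) < R + 1 := by linarith
    calc 2^k * c ≤ 2^k * ((ε' / (2^k * (R+1))) * (R+1)) := by
          exact mul_le_mul_of_nonneg_left this (by positivity)
      _ = ε' := by field_simp
  have hδc : δ ≤ c := by nlinarith
  -- bound on ‖x‖
  have hy0 : (0:ℝ) < ‖y‖ := lt_of_lt_of_le one_pos hy
  have hyn : (1:ℝ) ≤ ‖y‖ ^ n := one_le_pow₀ hy
  have hx : ‖x‖ ≤ R := by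
    by_contra h
    push_neg at h
    have hx1 : (1:ℝ) ≤ ‖x‖ := le_of_lt (lt_of_le_of_lt hR1 h)
    have hxm : ‖x‖ ≤ ‖x‖ ^ m := le_self_pow₀ hx1 (by omega)
    have : ‖x‖ ^ m ≤ ‖x‖ ^ m * ‖y‖ ^ n := le_mul_of_one_le_right (by positivity) hyn
    have hbR : b ≤ R := le_max_left _ _
    nlinarith
  -- bounds on ‖B x‖
  have hBx : ‖B x - x‖ ≤ δ * ‖x‖ := by
    have h1 := (B - ContinuousLinearMap.id ℝ (EuclideanSpace ℝ (Fin m))).le_opNorm x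
    simp only [ContinuousLinearMap.sub_apply, ContinuousLinearMap.id_apply] at h1
    calc ‖B x - x‖ ≤ ‖B - ContinuousLinearMap.id ℝ (EuclideanSpace ℝ (Fin m))‖ * ‖x‖ := h1
      _ ≤ δ * ‖x‖ := mul_le_mul_of_nonneg_right hB (norm_nonneg _)
  have hBub : ‖B x‖ ≤ (1 + c) * ‖x‖ := by
    have := norm_le_norm_add_norm_sub' (B x) x
    nlinarith [norm_nonneg x]
  have hBlb : (1 - c) * ‖x‖ ≤ ‖B x‖ := by
    have h := abs_norm_sub_norm_le (B x) x
    rw [abs_le] at h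
    nlinarith [norm_nonneg x]
  -- bounds on ‖C x + D y‖
  have hDy : ‖D y - y‖ ≤ δ * ‖y‖ := by
    have h1 := (D - ContinuousLinearMap.id ℝ (EuclideanSpace ℝ (Fin n))).le_opNorm y
    simp only [ContinuousLinearMap.sub_apply, ContinuousLinearMap.id_apply] at h1
    calc ‖D y - y‖ ≤ ‖D - ContinuousLinearMap.id ℝ (EuclideanSpace ℝ (Fin n))‖ * ‖y‖ := h1
      _ ≤ δ * ‖y‖ := mul_le_mul_of_nonneg_right hD (norm_nonneg _)
  have hCx : ‖C x‖ ≤ δ * ‖x‖ := by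
    have h1 := C.le_opNorm x
    calc ‖C x‖ ≤ ‖C‖ * ‖x‖ := h1
      _ ≤ δ * ‖x‖ := mul_le_mul_of_nonneg_right hC (norm_nonneg _)
  have hE : ‖C x + D y - y‖ ≤ c * ‖y‖ := by
    have heq : C x + D y - y = C x + (D y - y) := by abel
    have hxRy : ‖x‖ ≤ R * ‖y‖ := by nlinarith
    calc ‖C x + D y - y‖ = ‖C x + (D y - y)‖ := by rw [heq]
      _ ≤ ‖C x‖ + ‖D y - y‖ := norm_add_le _ _
      _ ≤ δ * (R * ‖y‖) + δ * ‖y‖ := by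
          have := mul_le_mul_of_nonneg_left hxRy hδ0.le
          linarith
      _ = c * ‖y‖ := by rw [hcdef]; ring
  have hCDub : ‖C x + D y‖ ≤ (1 + c) * ‖y‖ := by
    have h := abs_norm_sub_norm_le (C x + D y) y
    rw [abs_le] at h
    nlinarith
  have hCDlb : (1 - c) * ‖y‖ ≤ ‖C x + D y‖ := by
    have h := abs_norm_sub_norm_le (C x + D y) y
    rw [abs_le] at h
    nlinarith
  -- combine
  have hc1 : c ≤ 1 := by linarith
  have h1mc : (0:ℝ) ≤ 1 - c := by linarith
  set t : ℝ := ‖x‖ ^ m * ‖y‖ ^ n with htdef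
  have ht0 : 0 ≤ t := by positivity
  have hU : ‖B x‖ ^ m * ‖C x + D y‖ ^ n ≤ (1 + c) ^ k * t := by
    have h1 : ‖B x‖ ^ m ≤ ((1 + c) * ‖x‖) ^ m :=
      pow_le_pow_left₀ (norm_nonneg _) hBub m
    have h2 : ‖C x + D y‖ ^ n ≤ ((1 + c) * ‖y‖) ^ n :=
      pow_le_pow_left₀ (norm_nonneg _) hCDub n
    calc ‖B x‖ ^ m * ‖C x + D y‖ ^ n ≤ ((1 + c) * ‖x‖) ^ m * (((1 + c) * ‖y‖) ^ n) :=
          mul_le_mul h1 h2 (by positivity) (by positivity)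
      _ = (1 + c) ^ k * t := by
          rw [mul_pow, mul_pow, hk, pow_add, htdef]; ring
  have hL : (1 - c) ^ k * t ≤ ‖B x‖ ^ m * ‖C x + D y‖ ^ n := by
    have h1 : ((1 - c) * ‖x‖) ^ m ≤ ‖B x‖ ^ m :=
      pow_le_pow_left₀ (by positivity) hBlb m
    have h2 : ((1 - c) * ‖y‖) ^ n ≤ ‖C x + D y‖ ^ n :=
      pow_le_pow_left₀ (by positivity) hCDlb n
    calc (1 - c) ^ k * t = ((1 - c) * ‖x‖) ^ m * (((1 - c) * ‖y‖) ^ n) := by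
          rw [mul_pow, mul_pow, hk, pow_add, htdef]; ring
      _ ≤ ‖B x‖ ^ m * ‖C x + D y‖ ^ n :=
          mul_le_mul h1 h2 (by positivity) (by positivity)
  constructor
  · -- lower bound
    have hBern : 1 + (k : ℝ) * (-c) ≤ (1 + (-c)) ^ k :=
      one_add_mul_le_pow (by linarith) k
    have hk2 : (k : ℝ) ≤ 2 ^ k := by
      exact_mod_cast (Nat.lt_two_pow_self (n := k)).le
    have hkey : 1 - ε ≤ (1 - c) ^ k := by
      have h1 : (k:ℝ) * c ≤ 2^k * c := mul_le_mul_of_nonneg_right hk2 hc0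
      have : 1 - (k:ℝ)*c ≤ (1 - c)^k := by
        have := hBern; ring_nf at this ⊢; linarith
      linarith
    calc (1 - ε) * t ≤ (1 - c) ^ k * t := mul_le_mul_of_nonneg_right hkey ht0
      _ ≤ _ := hL
  · -- upper bound
    have hpow : (1 + c) ^ k ≤ 1 + 2 ^ k * c := by
      have := aux_pow k c hc0 hc1
      nlinarith
    have h1 : (1 + c) ^ k * t ≤ (1 + 2^k * c) * t :=
      mul_le_mul_of_nonneg_right hpow ht0
    have h2 : (2^k * c) * t ≤ ε' * t := mul_le_mul_of_nonneg_right hck ht0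
    have h3 : ε' * t ≤ (ε / b) * b := by
      have := mul_le_mul hε'2 ht (by exact ht0) (le_of_lt (div_pos hε hb))
      linarith
    have h4 : (ε / b) * b = ε := by field_simp
    nlinarith
end
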